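/- Let f : X → X be an expansive homeomorphism of a compact metric space. If x is a stable point (i.e., { W^s_ε(x) }_{ε>0} is a neighborhood basis of x), then there is an open neighborhood of x all of whose points are stable points. -/

import Mathlib

open Metric Filter Topology Set

/-- Local stable set of an invertible map. -/
def Ws {X : Type*} [MetricSpace X] (f : Equiv.Perm X) (ε : ℝ) (x : X) : Set X :=
  {y | ∀ n : ℕ, dist ((f ^ n) x) ((f ^ n) y) ≤ ε}

/-- A point is stable if its local stable sets form a neighborhood basis. -/
def IsStablePoint {X : Type*} [MetricSpace X] (f : Equiv.Perm X) (x : X) : Prop :=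
  ∀ ε : ℝ, 0 < ε → ∃ η > 0, Metric.ball x η ⊆ Ws f ε x

lemma cont_zpow {X : Type*} [MetricSpace X] (f : Equiv.Perm X)
    (hf : Continuous f) (hf' : Continuous f.symm) :
    ∀ k : ℤ, Continuous ⇑(f ^ k) := by
  intro k
  induction k using Int.induction_on with
  | zero => simpa using continuous_id
  | succ n ih =>
      have h : (f ^ ((n : ℤ) + 1)) = f ^ (n : ℤ) * f := zpow_add_one f n
      rw [h, Equiv.Perm.coe_mul]
      exact ih.comp hf
  | pred n ih =>
      have h : (f ^ (-(n : ℤ) - 1)) = f ^ (-(n : ℤ)) * f⁻¹ := zpow_sub_one f _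
      rw [h, Equiv.Perm.coe_mul]
      exact ih.comp hf'

/-- Uniform expansiveness. -/
lemma unif_exp {X : Type*} [MetricSpace X] [CompactSpace X] (f : Equiv.Perm X)
    (hc : ∀ k : ℤ, Continuous ⇑(f ^ k))
    (δ : ℝ) (hδ : 0 < δ)
    (hexp : ∀ x y : X, (∀ n : ℤ, dist ((f ^ n) x) ((f ^ n) y) ≤ δ) → x = y)
    (ε : ℝ) (hε : 0 < ε) :
    ∃ N : ℕ, ∀ u v : X,
      (∀ k : ℤ, |k| ≤ (N : ℤ) → dist ((f ^ k) u) ((f ^ k) v) ≤ δ) → dist u v ≤ ε := by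
  by_contra h
  push_neg at h
  set K : ℕ → Set (X × X) := fun N =>
    {p | (∀ k : ℤ, |k| ≤ (N : ℤ) → dist ((f ^ k) p.1) ((f ^ k) p.2) ≤ δ) ∧ ε ≤ dist p.1 p.2}
    with hK
  have hKclosed : ∀ N, IsClosed (K N) := by
    intro N
    have h1 : IsClosed {p : X × X |
        ∀ k : ℤ, |k| ≤ (N : ℤ) → dist ((f ^ k) p.1) ((f ^ k) p.2) ≤ δ} := by
      have he : {p : X × X | ∀ k : ℤ, |k| ≤ (N : ℤ) → dist ((f ^ k) p.1) ((f ^ k) p.2) ≤ δ}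
          = ⋂ k : ℤ, {p | |k| ≤ (N : ℤ) → dist ((f ^ k) p.1) ((f ^ k) p.2) ≤ δ} := by
        ext p; simp
      rw [he]
      apply isClosed_iInter
      intro k
      by_cases hk : |k| ≤ (N : ℤ)
      · simp only [hk, true_implies]
        exact isClosed_le (((hc k).comp continuous_fst).dist ((hc k).comp continuous_snd))
          continuous_const
      · simp [hk]
    have h2 : IsClosed {p : X × X | ε ≤ dist p.1 p.2} :=
      isClosed_le continuous_const (continuous_fst.dist continuous_snd)
    exact h1.inter h2
  have hKne : ∀ N, (K N).Nonempty := by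
    intro N
    obtain ⟨u, v, h1, h2⟩ := h N
    exact ⟨(u, v), h1, h2.le⟩
  have hKsub : ∀ N, K (N + 1) ⊆ K N := by
    intro N p hp
    refine ⟨fun k hk => hp.1 k (hk.trans (by exact_mod_cast Nat.le_succ N)), hp.2⟩
  have hKcompact : IsCompact (K 0) := (hKclosed 0).isCompact
  obtain ⟨p, hp⟩ := IsCompact.nonempty_iInter_of_sequence_nonempty_isCompact_isClosed
    K hKsub hKne hKcompact hKclosed
  have hall : ∀ k : ℤ, dist ((f ^ k) p.1) ((f ^ k) p.2) ≤ δ := by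
    intro k
    exact (mem_iInter.1 hp k.natAbs).1 k (by rw [Int.abs_eq_natAbs])
  have heq := hexp p.1 p.2 hall
  have hε' := (mem_iInter.1 hp 0).2
  rw [heq] at hε'
  simp at hε'
  linarith

/-- The set of stable points of an expansive homeomorphism is open: any stable
point has an open neighborhood consisting of stable points. -/
theorem stable_points_open {X : Type*} [MetricSpace X] [CompactSpace X]
    (f : Equiv.Perm X) (hf : Continuous f) (hf' : Continuous f.symm)
    (δ : ℝ) (hδ : 0 < δ)
    (hexp : ∀ x y : X, (∀ n : ℤ, dist ((f ^ n) x) ((f ^ n) y) ≤ δ) → x = y)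
    (x : X) (hx : IsStablePoint f x) :
    ∃ U : Set X, IsOpen U ∧ x ∈ U ∧ ∀ y ∈ U, IsStablePoint f y := by
  have hc : ∀ k : ℤ, Continuous ⇑(f ^ k) := cont_zpow f hf hf'
  have hcn : ∀ n : ℕ, Continuous ⇑(f ^ n) := fun n => by
    have := hc n; rwa [zpow_natCast] at this
  obtain ⟨η₀, hη₀pos, hη₀⟩ := hx (δ / 3) (by linarith)
  refine ⟨ball x η₀, isOpen_ball, mem_ball_self hη₀pos, ?_⟩
  intro y hy ε hε
  obtain ⟨N, hN⟩ := unif_exp f hc δ hδ hexp ε hε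
  have hmem : (⋂ n ∈ Finset.range (N + 1), {z | dist ((f ^ n) y) ((f ^ n) z) ≤ ε})
      ∩ ball x η₀ ∈ 𝓝 y := by
    apply inter_mem
    · apply (Filter.biInter_mem (Finset.finite_toSet _)).2
      intro n _
      have hct : ContinuousAt ⇑(f ^ n) y := (hcn n).continuousAt
      have h2 : closedBall ((f ^ n) y) ε ∈ 𝓝 ((f ^ n) y) := closedBall_mem_nhds _ hε
      filter_upwards [hct h2] with z hz
      simpa [dist_comm] using hz
    · exact isOpen_ball.mem_nhds hy
  obtain ⟨η, hηpos, hball⟩ := Metric.mem_nhds_iff.1 hmem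
  refine ⟨η, hηpos, ?_⟩
  intro z hz n
  obtain ⟨hz1, hz2⟩ := hball hz
  rcases le_or_gt n N with hn | hn
  · exact mem_iInter₂.1 hz1 n (Finset.mem_range.2 (Nat.lt_succ_of_le hn))
  · have hy' : y ∈ Ws f (δ / 3) x := hη₀ hy
    have hz' : z ∈ Ws f (δ / 3) x := hη₀ hz2
    have key : dist ((f ^ (n : ℤ)) y) ((f ^ (n : ℤ)) z) ≤ ε := by
      apply hN
      intro k hk
      obtain ⟨hk1, hk2⟩ := abs_le.1 hk
      have hk' : 0 ≤ k + (n : ℤ) := by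
        have : (N : ℤ) < (n : ℤ) := by exact_mod_cast hn
        omega
      rw [← Equiv.Perm.mul_apply, ← Equiv.Perm.mul_apply, ← zpow_add]
      set m := (k + (n : ℤ)).toNat with hm
      have hmk : (k + (n : ℤ)) = (m : ℤ) := (Int.toNat_of_nonneg hk').symm
      rw [hmk, zpow_natCast]
      have t1 := hy' m
      have t2 := hz' m
      calc dist ((f ^ m) y) ((f ^ m) z)
          ≤ dist ((f ^ m) y) ((f ^ m) x) + dist ((f ^ m) x) ((f ^ m) z) := dist_triangle _ _ _
        _ ≤ δ := by rw [dist_comm ((f ^ m) y)] ; linarith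
    rwa [zpow_natCast] at key
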